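/- Let μ be a multiplication on A, with symmetric part ρ(x,y) = μ(x,y) + μ(y,x) and skew-symmetric part ψ(x,y) = μ(x,y) − μ(y,x). Then μ is weakly associative, i.e. A_μ(x,y,z) + A_μ(y,z,x) − A_μ(y,x,z) = 0 for all x,y,z ∈ A, if and only if ψ satisfies the Jacobi identity and the Leibniz identity ψ(x,ρ(y,z)) = ρ(y,ψ(x,z)) + ρ(z,ψ(x,y)) holds for all x,y,z ∈ A; that is, iff (A,ρ,ψ) is a nonassociative Poisson algebra. -/
import Mathlib


/-- The associator of a bilinear multiplication. -/
def assocMap {K A : Type*} [Field K] [AddCommGroup A] [Module K A]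
    (μ : A →ₗ[K] A →ₗ[K] A) (x y z : A) : A :=
  μ x (μ y z) - μ (μ x y) z

/-- The symmetric part of a bilinear multiplication. -/
def symPart {K A : Type*} [Field K] [AddCommGroup A] [Module K A]
    (μ : A →ₗ[K] A →ₗ[K] A) (x y : A) : A :=
  μ x y + μ y x

/-- The skew-symmetric part of a bilinear multiplication. -/
def skewPart {K A : Type*} [Field K] [AddCommGroup A] [Module K A]
    (μ : A →ₗ[K] A →ₗ[K] A) (x y : A) : A :=
  μ x y - μ y x

/-- A multiplication `μ` is weakly associative iff its skew-symmetric part `ψ`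
satisfies the Jacobi identity and the Leibniz identity
`ψ(x,ρ(y,z)) = ρ(y,ψ(x,z)) + ρ(z,ψ(x,y))` with its symmetric part `ρ`,
i.e. iff `(A, ρ, ψ)` is a nonassociative Poisson algebra. -/
theorem weakly_associative_iff_nonassoc_poisson {K A : Type*} [Field K] [CharZero K]
    [AddCommGroup A] [Module K A]
    (μ : A →ₗ[K] A →ₗ[K] A) :
    (∀ x y z : A, assocMap μ x y z + assocMap μ y z x - assocMap μ y x z = 0) ↔
    ((∀ x y z : A,
        skewPart μ x (skewPart μ y z) + skewPart μ y (skewPart μ z x) +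
          skewPart μ z (skewPart μ x y) = 0) ∧
     (∀ x y z : A,
        skewPart μ x (symPart μ y z) =
          symPart μ y (skewPart μ x z) + symPart μ z (skewPart μ x y))) := by
  constructor
  · intro h
    constructor
    · intro x y z
      have h1 := h x y z
      have h2 := h x z y
      simp only [assocMap, skewPart, symPart, map_add, map_sub, LinearMap.add_apply,
        LinearMap.sub_apply] at h1 h2 ⊢
      linear_combination (norm := module) h1 - h2
    · intro x y z
      have h1 := h x y z
      have h2 := h x z y
      simp only [assocMap, skewPart, symPart, map_add, map_sub, LinearMap.add_apply,
        LinearMap.sub_apply] at h1 h2 ⊢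
      linear_combination (norm := module) h1 + h2
  · rintro ⟨hJ, hL⟩ x y z
    have h1 := hJ x y z
    have h2 := hL x y z
    simp only [assocMap, skewPart, symPart, map_add, map_sub, LinearMap.add_apply,
      LinearMap.sub_apply] at h1 h2 ⊢
    linear_combination (norm := module) ((2:K)⁻¹) • h1 + ((2:K)⁻¹) • h2
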